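/- KKT condition at a nonzero coordinate: if β̂ is a minimizer of the LES objective Q and β̂_{kj} ≠ 0, then (1/n)·X_{kj}^T (y − Xβ̂) = λ α w_k · ( exp(α|β̂_{kj}|) / Σ_{l=1}^{p_k} exp(α|β̂_{kl}|) ) · sign(β̂_{kj}). -/

import Mathlib

set_option maxHeartbeats 1000000


/-- **KKT condition at a nonzero coordinate.**
If `β̂` is a minimizer of the LES objective `Q` and `β̂ kj ≠ 0`, then
`(1/n) X kjᵀ (y - X β̂) = λ α w k * exp (α |β̂ kj|) / (∑ l, exp (α |β̂ kl|)) * sign (β̂ kj)`. -/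
theorem les_kkt_nonzero (n K : ℕ) (hn : 0 < n) (hK : 0 < K)
    (p : Fin K → ℕ) (hp : ∀ k, 1 ≤ p k)
    (X : Fin n → (Σ k : Fin K, Fin (p k)) → ℝ) (y : Fin n → ℝ)
    (lam α : ℝ) (hlam : 0 < lam) (hα : 0 < α)
    (w : Fin K → ℝ) (hw : ∀ k, 0 ≤ w k)
    (βh : (Σ k : Fin K, Fin (p k)) → ℝ)
    (hmin : IsMinOn
      (fun β : (Σ k : Fin K, Fin (p k)) → ℝ =>
        (1 / (2 * (n : ℝ))) * ∑ i : Fin n, (y i - ∑ j' : Σ k : Fin K, Fin (p k), X i j' * β j') ^ 2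
          + lam * ∑ l : Fin K, w l * Real.log (∑ j' : Fin (p l), Real.exp (α * |β ⟨l, j'⟩|)))
      Set.univ βh)
    (k : Fin K) (j : Fin (p k)) (hne : βh ⟨k, j⟩ ≠ 0) :
    (1 / (n : ℝ)) * ∑ i : Fin n,
        X i ⟨k, j⟩ * (y i - ∑ j' : Σ k : Fin K, Fin (p k), X i j' * βh j') =
      lam * α * w k *
        (Real.exp (α * |βh ⟨k, j⟩|) / ∑ l : Fin (p k), Real.exp (α * |βh ⟨k, l⟩|)) *
        Real.sign (βh ⟨k, j⟩) := by
  classical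
  set idx : (Σ k : Fin K, Fin (p k)) := ⟨k, j⟩ with hidx
  set t₀ : ℝ := βh idx with ht₀
  set Q : ((Σ k : Fin K, Fin (p k)) → ℝ) → ℝ :=
    (fun β : (Σ k : Fin K, Fin (p k)) → ℝ =>
        (1 / (2 * (n : ℝ))) * ∑ i : Fin n, (y i - ∑ j' : Σ k : Fin K, Fin (p k), X i j' * β j') ^ 2
          + lam * ∑ l : Fin K, w l * Real.log (∑ j' : Fin (p l), Real.exp (α * |β ⟨l, j'⟩|)))
    with hQ
  set g : ℝ → ℝ := fun t => Q (Function.update βh idx t) with hg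
  have hupd0 : Function.update βh idx t₀ = βh := Function.update_eq_self idx βh
  -- local min of g at t₀
  have hloc : IsLocalMin g t₀ := by
    apply Filter.Eventually.of_forall
    intro t
    have h1 : g t₀ = Q βh := by rw [hg]; simp [hupd0]
    rw [h1]
    exact hmin (Set.mem_univ _)
  -- derivative of coordinate update
  have hupd : ∀ (j' : Σ k : Fin K, Fin (p k)),
      HasDerivAt (fun t => Function.update βh idx t j') (if j' = idx then 1 else 0) t₀ := by
    intro j'
    by_cases h : j' = idx
    · subst h
      simp only [Function.update_self, if_pos rfl]
      exact hasDerivAt_id t₀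
    · simp only [Function.update_of_ne h, if_neg h]
      exact hasDerivAt_const t₀ _
  -- inner linear sums
  have hu : ∀ i : Fin n,
      HasDerivAt (fun t => ∑ j' : Σ k : Fin K, Fin (p k), X i j' * Function.update βh idx t j')
        (X i idx) t₀ := by
    intro i
    have := HasDerivAt.fun_sum (fun j' (_ : j' ∈ Finset.univ) => (hupd j').const_mul (X i j'))
    refine this.congr_deriv ?_
    simp [mul_ite]
  -- quadratic part
  have hquad : HasDerivAt
      (fun t => (1 / (2 * (n : ℝ))) * ∑ i : Fin n,
        (y i - ∑ j' : Σ k : Fin K, Fin (p k), X i j' * Function.update βh idx t j') ^ 2)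
      ((1 / (2 * (n : ℝ))) * ∑ i : Fin n,
        (2 * (y i - ∑ j' : Σ k : Fin K, Fin (p k), X i j' * βh j') * (-(X i idx)))) t₀ := by
    apply HasDerivAt.const_mul
    apply HasDerivAt.fun_sum
    intro i _
    have h1 := ((hu i).const_sub (y i)).fun_pow 2
    refine h1.congr_deriv ?_
    simp only [hupd0]
    ring
  -- log part summands
  have hT : ∀ l : Fin K, 0 < ∑ j' : Fin (p l), Real.exp (α * |βh ⟨l, j'⟩|) := by
    intro l
    apply Finset.sum_pos (fun _ _ => Real.exp_pos _)
    exact Finset.univ_nonempty_iff.mpr ⟨⟨0, hp l⟩⟩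
  set sgn : ℝ := (SignType.sign t₀ : ℝ) with hsgn
  set E : ℝ := Real.exp (α * |t₀|) with hE
  have hterm : ∀ (l : Fin K) (j' : Fin (p l)),
      HasDerivAt (fun t => Real.exp (α * |Function.update βh idx t ⟨l, j'⟩|))
        (if (⟨l, j'⟩ : Σ k : Fin K, Fin (p k)) = idx then α * sgn * E else 0) t₀ := by
    intro l j'
    by_cases h : (⟨l, j'⟩ : Σ k : Fin K, Fin (p k)) = idx
    · rw [if_pos h]
      have heq : (fun t => Real.exp (α * |Function.update βh idx t ⟨l, j'⟩|))
          = fun t => Real.exp (α * |t|) := by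
        funext t; rw [h, Function.update_self]
      rw [heq]
      have := (((hasDerivAt_abs hne).const_mul α).exp)
      convert this using 1
      ring
    · have heq : (fun t => Real.exp (α * |Function.update βh idx t ⟨l, j'⟩|))
          = fun _ => Real.exp (α * |βh ⟨l, j'⟩|) := by
        funext t; rw [Function.update_of_ne h]
      rw [heq, if_neg h]
      exact hasDerivAt_const t₀ _
  have hDl : ∀ l : Fin K,
      (∑ j' : Fin (p l), if (⟨l, j'⟩ : Σ k : Fin K, Fin (p k)) = idx then α * sgn * E else 0)
        = if l = k then α * sgn * E else 0 := by
    intro l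
    by_cases h : l = k
    · subst h
      rw [if_pos rfl]
      have : ∀ j' : Fin (p l), ((⟨l, j'⟩ : Σ k : Fin K, Fin (p k)) = idx) ↔ j' = j := by
        intro j'
        rw [hidx]
        constructor
        · intro hcon
          exact eq_of_heq (Sigma.mk.inj_iff.mp hcon).2
        · intro hcon; rw [hcon]
      simp only [this]
      simp
    · rw [if_neg h]
      apply Finset.sum_eq_zero
      intro j' _
      rw [if_neg]
      intro hcon
      exact h (congrArg Sigma.fst hcon)
  -- log part
  have hlog : HasDerivAt
      (fun t => lam * ∑ l : Fin K,
        w l * Real.log (∑ j' : Fin (p l), Real.exp (α * |Function.update βh idx t ⟨l, j'⟩|)))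
      (lam * ∑ l : Fin K, w l * ((if l = k then α * sgn * E else 0) /
        (∑ j' : Fin (p l), Real.exp (α * |βh ⟨l, j'⟩|)))) t₀ := by
    apply HasDerivAt.const_mul
    apply HasDerivAt.fun_sum
    intro l _
    apply HasDerivAt.const_mul
    have hsum : HasDerivAt
        (fun t => ∑ j' : Fin (p l), Real.exp (α * |Function.update βh idx t ⟨l, j'⟩|))
        (if l = k then α * sgn * E else 0) t₀ := by
      rw [← hDl l]
      exact HasDerivAt.fun_sum (fun j' _ => hterm l j')
    have := hsum.log (by rw [hupd0]; exact (hT l).ne')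
    rwa [hupd0] at this
  -- total derivative
  have htot := hquad.add hlog
  have hzero := hloc.hasDerivAt_eq_zero htot
  -- simplify the zero condition
  set T : ℝ := ∑ l : Fin (p k), Real.exp (α * |βh ⟨k, l⟩|) with hTdef
  have hls : (∑ l : Fin K, w l * ((if l = k then α * sgn * E else 0) /
      (∑ j' : Fin (p l), Real.exp (α * |βh ⟨l, j'⟩|)))) = w k * (α * sgn * E / T) := by
    rw [Finset.sum_eq_single k]
    · rw [if_pos rfl]
    · intro l _ h; rw [if_neg h]; simp
    · intro h; exact absurd (Finset.mem_univ k) h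
  rw [hls] at hzero
  have hq2 : (∑ i : Fin n,
      (2 * (y i - ∑ j' : Σ k : Fin K, Fin (p k), X i j' * βh j') * (-(X i idx))))
      = -2 * ∑ i : Fin n, X i idx * (y i - ∑ j' : Σ k : Fin K, Fin (p k), X i j' * βh j') := by
    rw [Finset.mul_sum]
    exact Finset.sum_congr rfl (fun i _ => by ring)
  rw [hq2] at hzero
  -- sign conversion
  have hsgnR : Real.sign t₀ = sgn := by
    rcases hne.lt_or_gt with h | h
    · rw [Real.sign_of_neg h, hsgn, sign_neg h]; simp
    · rw [Real.sign_of_pos h, hsgn, sign_pos h]; simp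
  rw [hsgnR]
  have hn' : (n : ℝ) ≠ 0 := Nat.cast_ne_zero.mpr hn.ne'
  have hT0 : T ≠ 0 := (hT k).ne'
  field_simp at hzero ⊢
  nlinarith [hzero]
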